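/- arXiv:2109.12570 — 2 statements merged into one kernel-verified Lean document; each statement's English description precedes it below -/
import Mathlib

section
/- For every positive integer n and integer k ≥ 0 with n even, the series ∑_{l=1}^∞ 1/(l·(n/2 + k + l)³) equals (8/(2k+n)) · ( H_{n/2+k}/(2k+n)² + (H^{(2)}_{n/2+k} − ζ(2))/(2(2k+n)) + (H^{(3)}_{n/2+k} − ζ(3))/4 ), where H_m^{(p)} denotes the m-th generalized harmonic number of order p and ζ is the Riemann zeta function. -/
/-- The `m`-th generalized harmonic number of order `p`. -/
noncomputable def genHarmonic (m p : ℕ) : ℝ := ∑ j ∈ Finset.range m, 1 / ((j : ℝ) + 1) ^ p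

noncomputable def zeta3 : ℝ := ∑' j : ℕ, 1 / ((j : ℝ) + 1) ^ 3

open Finset Filter Real Topology

lemma summable_base (p : ℕ) (hp : 1 < p) :
    Summable (fun j : ℕ => 1 / ((j : ℝ) + 1) ^ p) := by
  have := (summable_nat_add_iff 1).mpr (Real.summable_one_div_nat_pow.mpr hp)
  refine this.congr fun j => ?_
  push_cast
  ring_nf

lemma hasSum_tail (m : ℕ) (f : ℕ → ℝ) (a : ℝ) (hf : HasSum f a) :
    HasSum (fun l : ℕ => f (l + m)) (a - ∑ j ∈ Finset.range m, f j) := by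
  refine (hasSum_nat_add_iff (f := f) m).mpr ?_
  have h : a - ∑ j ∈ Finset.range m, f j + ∑ i ∈ Finset.range m, f i = a := by ring
  rwa [h]

lemma hasSum_base_two :
    HasSum (fun j : ℕ => 1 / ((j : ℝ) + 1) ^ 2) (Real.pi ^ 2 / 6) := by
  have h := hasSum_tail 1 (fun n : ℕ => (1 : ℝ) / (n : ℝ) ^ 2) (Real.pi ^ 2 / 6) hasSum_zeta_two
  have e : (fun j : ℕ => 1 / ((j : ℝ) + 1) ^ 2)
      = fun l : ℕ => (1 : ℝ) / ((l + 1 : ℕ) : ℝ) ^ 2 := by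
    funext j; push_cast; ring
  rw [e]
  convert h using 1
  simp

lemma hasSum_tele (c : ℕ) :
    HasSum (fun l : ℕ => 1 / ((l : ℝ) + c + 1) - 1 / ((l : ℝ) + c + 2)) (1 / ((c : ℝ) + 1)) := by
  have hnn : ∀ l : ℕ, 0 ≤ 1 / ((l : ℝ) + c + 1) - 1 / ((l : ℝ) + c + 2) := by
    intro l
    have h1 : (0:ℝ) < (l : ℝ) + c + 1 := by positivity
    have : 1 / ((l : ℝ) + c + 2) ≤ 1 / ((l : ℝ) + c + 1) := by
      apply one_div_le_one_div_of_le h1; linarith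
    linarith
  rw [hasSum_iff_tendsto_nat_of_nonneg hnn]
  have key : ∀ N : ℕ, ∑ l ∈ Finset.range N, (1 / ((l : ℝ) + c + 1) - 1 / ((l : ℝ) + c + 2))
      = 1 / ((c : ℝ) + 1) - 1 / ((N : ℝ) + c + 1) := by
    intro N
    have h := Finset.sum_range_sub' (f := fun l : ℕ => 1 / ((l : ℝ) + c + 1)) N
    have e : ∑ l ∈ Finset.range N, (1 / ((l : ℝ) + c + 1) - 1 / ((l : ℝ) + c + 2))
        = ∑ i ∈ Finset.range N, ((fun l : ℕ => 1 / ((l : ℝ) + c + 1)) i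
            - (fun l : ℕ => 1 / ((l : ℝ) + c + 1)) (i + 1)) := by
      apply Finset.sum_congr rfl
      intro i _
      push_cast
      ring_nf
    rw [e, h]
    norm_num
  simp only [key]
  have h0 : Tendsto (fun N : ℕ => 1 / ((N : ℝ) + c + 1)) atTop (𝓝 0) := by
    have h1 := (tendsto_one_div_atTop_nhds_zero_nat (𝕜 := ℝ)).comp (tendsto_add_atTop_nat (c + 1))
    refine h1.congr fun N => ?_
    simp only [Function.comp]
    push_cast
    ring_nf
  have h2 := (tendsto_const_nhds (x := 1 / ((c : ℝ) + 1)) (f := atTop (α := ℕ))).sub h0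
  simpa using h2

lemma hasSum_A (m : ℕ) :
    HasSum (fun l : ℕ => 1 / ((l : ℝ) + 1) - 1 / ((l : ℝ) + m + 1)) (genHarmonic m 1) := by
  have key : ∀ l : ℕ, 1 / ((l : ℝ) + 1) - 1 / ((l : ℝ) + m + 1)
      = ∑ i ∈ Finset.range m, (1 / ((l : ℝ) + i + 1) - 1 / ((l : ℝ) + i + 2)) := by
    intro l
    have h := Finset.sum_range_sub' (f := fun i : ℕ => 1 / ((l : ℝ) + i + 1)) m
    have e : ∑ i ∈ Finset.range m, (1 / ((l : ℝ) + i + 1) - 1 / ((l : ℝ) + i + 2))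
        = ∑ i ∈ Finset.range m, ((fun i : ℕ => 1 / ((l : ℝ) + i + 1)) i
            - (fun i : ℕ => 1 / ((l : ℝ) + i + 1)) (i + 1)) := by
      apply Finset.sum_congr rfl
      intro i _
      push_cast
      ring_nf
    rw [e, h]
    norm_num
  have h := hasSum_sum (s := Finset.range m)
      (f := fun (i l : ℕ) => 1 / ((l : ℝ) + i + 1) - 1 / ((l : ℝ) + i + 2))
      (a := fun i : ℕ => 1 / ((i : ℝ) + 1)) (fun i _ => hasSum_tele i)
  have e2 : (fun l : ℕ => 1 / ((l : ℝ) + 1) - 1 / ((l : ℝ) + m + 1))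
      = fun l : ℕ => ∑ i ∈ Finset.range m,
          (1 / ((l : ℝ) + i + 1) - 1 / ((l : ℝ) + i + 2)) := funext key
  rw [e2]
  have e3 : genHarmonic m 1 = ∑ i ∈ Finset.range m, 1 / ((i : ℝ) + 1) := by
    unfold genHarmonic; simp
  rw [e3]
  exact h

theorem stmt_4 (n k : ℕ) (hn : Even n) (hpos : 0 < n) :
    (∑' l : ℕ, 1 / (((l : ℝ) + 1) * ((n : ℝ) / 2 + k + ((l : ℝ) + 1)) ^ 3))
      = (8 / (2 * (k : ℝ) + n)) *
        (genHarmonic (n / 2 + k) 1 / (2 * (k : ℝ) + n) ^ 2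
          + (genHarmonic (n / 2 + k) 2 - Real.pi ^ 2 / 6) / (2 * (2 * (k : ℝ) + n))
          + (genHarmonic (n / 2 + k) 3 - zeta3) / 4) := by
  obtain ⟨t, ht⟩ := hn
  have hnt : n = 2 * t := by omega
  have hM : ((n : ℝ) / 2 + (k : ℝ)) = ((n / 2 + k : ℕ) : ℝ) := by
    subst hnt
    push_cast [Nat.mul_div_cancel_left t (by norm_num : 0 < 2)]
    ring
  have h2kn : (2 * (k : ℝ) + (n : ℝ)) = 2 * ((n / 2 + k : ℕ) : ℝ) := by
    subst hnt
    push_cast [Nat.mul_div_cancel_left t (by norm_num : 0 < 2)]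
    ring
  have hmpos : 0 < n / 2 + k := by omega
  simp only [hM, h2kn]
  generalize hg : n / 2 + k = m at *
  clear hM h2kn hg ht hnt hpos n t k
  have hMpos : (0:ℝ) < (m : ℝ) := by exact_mod_cast hmpos
  have hMne : ((m : ℝ)) ≠ 0 := ne_of_gt hMpos
  -- the three HasSum pieces
  have hA := hasSum_A m
  have hB : HasSum (fun l : ℕ => 1 / ((l : ℝ) + m + 1) ^ 2)
      (Real.pi ^ 2 / 6 - genHarmonic m 2) := by
    have h := hasSum_tail m _ _ hasSum_base_two
    have e : (fun l : ℕ => 1 / ((l : ℝ) + m + 1) ^ 2)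
        = fun l : ℕ => 1 / (((l + m : ℕ) : ℝ) + 1) ^ 2 := by
      funext l; push_cast; ring
    rw [e]
    exact h
  have hC : HasSum (fun l : ℕ => 1 / ((l : ℝ) + m + 1) ^ 3)
      (zeta3 - genHarmonic m 3) := by
    have hs : Summable (fun j : ℕ => 1 / ((j : ℝ) + 1) ^ 3) := summable_base 3 (by norm_num)
    have h := hasSum_tail m _ _ hs.hasSum
    have e : (fun l : ℕ => 1 / ((l : ℝ) + m + 1) ^ 3)
        = fun l : ℕ => 1 / (((l + m : ℕ) : ℝ) + 1) ^ 3 := by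
      funext l; push_cast; ring
    rw [e]
    exact h
  have hcomb := ((hA.mul_left (1 / (m : ℝ) ^ 3)).sub (hB.mul_left (1 / (m : ℝ) ^ 2))).sub
    (hC.mul_left (1 / (m : ℝ)))
  have heq : (fun l : ℕ => 1 / (m : ℝ) ^ 3 * (1 / ((l : ℝ) + 1) - 1 / ((l : ℝ) + m + 1))
      - 1 / (m : ℝ) ^ 2 * (1 / ((l : ℝ) + m + 1) ^ 2)
      - 1 / (m : ℝ) * (1 / ((l : ℝ) + m + 1) ^ 3))
      = fun l : ℕ => 1 / (((l : ℝ) + 1) * ((m : ℝ) + ((l : ℝ) + 1)) ^ 3) := by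
    funext l
    have hl1 : ((l : ℝ) + 1) ≠ 0 := by positivity
    have hl2 : ((l : ℝ) + (m : ℝ) + 1) ≠ 0 := by positivity
    rw [show ((m : ℝ) + ((l : ℝ) + 1)) = (l : ℝ) + (m : ℝ) + 1 by ring]
    field_simp
    ring
  rw [heq] at hcomb
  rw [hcomb.tsum_eq]
  field_simp
  ring
end

section
/- The first-order correction u₁(s) = −(6/7) · u̇₀(s) · log(cosh s), together with τ₀ = 10/7, solves the linear inhomogeneous ODE ü₁(s) − 2u₀(s)u₁(s) = (u₀(s) + τ₀)·u̇₀(s), where u₀(s) = 6 tanh²(s) − 4, and u̇₁(s), ü₁(s) → 0 as s → ±∞. -/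
open Filter

noncomputable def u₀ : ℝ → ℝ := fun s => 6 * Real.tanh s ^ 2 - 4

noncomputable def u₁ : ℝ → ℝ := fun s => -(6 / 7) * deriv u₀ s * Real.log (Real.cosh s)

private lemma hasDerivAt_tanh' (s : ℝ) :
    HasDerivAt Real.tanh (1 - Real.tanh s ^ 2) s := by
  have hc := (Real.cosh_pos s).ne'
  have h := (Real.hasDerivAt_sinh s).div (Real.hasDerivAt_cosh s) hc
  have he : Real.tanh = fun x => Real.sinh x / Real.cosh x :=
    funext fun x => Real.tanh_eq_sinh_div_cosh x
  rw [he]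
  refine h.congr_deriv ?_
  simp only []
  field_simp

private lemma hasDerivAt_logcosh (s : ℝ) :
    HasDerivAt (fun x => Real.log (Real.cosh x)) (Real.tanh s) s := by
  have := (Real.hasDerivAt_cosh s).log (Real.cosh_pos s).ne'
  simpa [Real.tanh_eq_sinh_div_cosh] using this

private lemma hu₀ (s : ℝ) :
    HasDerivAt u₀ (12 * Real.tanh s * (1 - Real.tanh s ^ 2)) s := by
  have h := (((hasDerivAt_tanh' s).pow 2).const_mul 6).sub_const 4
  refine h.congr_deriv ?_
  ring

private lemma du₀ : deriv u₀ = fun s => 12 * Real.tanh s * (1 - Real.tanh s ^ 2) :=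
  funext fun s => (hu₀ s).deriv

private lemma u₁_eq : u₁ = fun s =>
    -(72 / 7) * (Real.tanh s * (1 - Real.tanh s ^ 2)) * Real.log (Real.cosh s) := by
  funext s
  simp only [u₁, du₀]
  ring

noncomputable def D1 : ℝ → ℝ := fun s =>
  -(72 / 7) * ((1 - Real.tanh s ^ 2) * (1 - 3 * Real.tanh s ^ 2) * Real.log (Real.cosh s)
    + Real.tanh s ^ 2 * (1 - Real.tanh s ^ 2))

noncomputable def D2 : ℝ → ℝ := fun s =>
  -(72 / 7) * ((12 * Real.tanh s ^ 3 - 8 * Real.tanh s)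
      * ((1 - Real.tanh s ^ 2) * Real.log (Real.cosh s))
    + (3 * Real.tanh s - 7 * Real.tanh s ^ 3) * (1 - Real.tanh s ^ 2))

private lemma hu₁ (s : ℝ) : HasDerivAt u₁ (D1 s) s := by
  rw [u₁_eq]
  have h1 : HasDerivAt (fun x => Real.tanh x * (1 - Real.tanh x ^ 2))
      ((1 - Real.tanh s ^ 2) * (1 - 3 * Real.tanh s ^ 2)) s := by
    have := (hasDerivAt_tanh' s).mul (((hasDerivAt_tanh' s).pow 2).const_sub 1)
    refine this.congr_deriv ?_
    simp only [Pi.pow_apply]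
    ring
  have h := (h1.const_mul (-(72 / 7) : ℝ)).mul (hasDerivAt_logcosh s)
  refine h.congr_deriv ?_
  simp only [D1]
  ring

private lemma du₁ : deriv u₁ = D1 := funext fun s => (hu₁ s).deriv

private lemma hD1 (s : ℝ) : HasDerivAt D1 (D2 s) s := by
  have hT := hasDerivAt_tanh' s
  have hg : HasDerivAt (fun x => (1 - Real.tanh x ^ 2) * (1 - 3 * Real.tanh x ^ 2))
      (-(2 * Real.tanh s * (1 - Real.tanh s ^ 2)) * (1 - 3 * Real.tanh s ^ 2)
        + (1 - Real.tanh s ^ 2) * (-(3 * (2 * Real.tanh s * (1 - Real.tanh s ^ 2))))) s := by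
    have := ((hT.pow 2).const_sub 1).mul (((hT.pow 2).const_mul 3).const_sub 1)
    refine this.congr_deriv ?_
    simp only [Pi.pow_apply]
    ring
  have hq : HasDerivAt (fun x => Real.tanh x ^ 2 * (1 - Real.tanh x ^ 2))
      (2 * Real.tanh s * (1 - Real.tanh s ^ 2) * (1 - Real.tanh s ^ 2)
        + Real.tanh s ^ 2 * (-(2 * Real.tanh s * (1 - Real.tanh s ^ 2)))) s := by
    have := (hT.pow 2).mul ((hT.pow 2).const_sub 1)
    refine this.congr_deriv ?_
    simp only [Pi.pow_apply]
    ring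
  have h := (((hg.mul (hasDerivAt_logcosh s)).add hq).const_mul (-(72 / 7) : ℝ))
  have he : D1 = fun x => -(72 / 7) *
      ((1 - Real.tanh x ^ 2) * (1 - 3 * Real.tanh x ^ 2) * Real.log (Real.cosh x)
        + Real.tanh x ^ 2 * (1 - Real.tanh x ^ 2)) := rfl
  rw [he]
  refine h.congr_deriv ?_
  simp only [D2]
  ring

private lemma du₂ : deriv (deriv u₁) = D2 := by
  rw [du₁]; exact funext fun s => (hD1 s).deriv

private lemma tendsto_cosh_atTop : Tendsto Real.cosh atTop atTop := by
  apply tendsto_atTop_mono (f := fun x => Real.exp x / 2)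
  · intro x
    rw [Real.cosh_eq]
    have := (Real.exp_pos (-x)).le
    linarith
  · exact Real.tendsto_exp_atTop.atTop_div_const (by norm_num)

private lemma tendsto_cosh_atBot : Tendsto Real.cosh atBot atTop := by
  have h := tendsto_cosh_atTop.comp tendsto_neg_atBot_atTop
  refine h.congr fun x => ?_
  simp [Function.comp, Real.cosh_neg]

private lemma one_sub_tanh_sq (s : ℝ) :
    1 - Real.tanh s ^ 2 = 1 / Real.cosh s ^ 2 := by
  have h := Real.cosh_sq_sub_sinh_sq s
  have hc := (Real.cosh_pos s).ne'
  rw [Real.tanh_eq_sinh_div_cosh]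
  field_simp
  linarith

private lemma tendsto_M {l : Filter ℝ} (hl : Tendsto Real.cosh l atTop) :
    Tendsto (fun s => (1 - Real.tanh s ^ 2) * Real.log (Real.cosh s)) l (nhds 0) := by
  have h0 : Tendsto (fun x : ℝ => Real.log x / x ^ (2 : ℝ)) atTop (nhds 0) :=
    (isLittleO_log_rpow_atTop (by norm_num)).tendsto_div_nhds_zero
  have h1 : Tendsto (fun x : ℝ => Real.log x / x ^ 2) atTop (nhds 0) := by
    refine h0.congr' ?_
    filter_upwards [eventually_ge_atTop (0 : ℝ)] with x hx
    rw [show (2 : ℝ) = ((2 : ℕ) : ℝ) by norm_num, Real.rpow_natCast]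
  have h2 := h1.comp hl
  refine h2.congr fun s => ?_
  simp only [Function.comp]
  rw [one_sub_tanh_sq]
  ring

private lemma tanh_eq_exp (x : ℝ) :
    Real.tanh x = 1 - 2 / (Real.exp (2 * x) + 1) := by
  rw [Real.tanh_eq_sinh_div_cosh, Real.sinh_eq, Real.cosh_eq,
    show (2 : ℝ) * x = x + x by ring, Real.exp_add, Real.exp_neg]
  have h1 := Real.exp_ne_zero x
  have h2 : Real.exp x + (Real.exp x)⁻¹ ≠ 0 := by positivity
  have h3 : Real.exp x * Real.exp x + 1 ≠ 0 := by positivity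
  field_simp
  ring

private lemma tendsto_tanh_atTop : Tendsto Real.tanh atTop (nhds 1) := by
  have hd : Tendsto (fun x : ℝ => Real.exp (2 * x) + 1) atTop atTop :=
    (Real.tendsto_exp_atTop.comp (tendsto_id.const_mul_atTop (by norm_num))).atTop_add
      tendsto_const_nhds
  have h0 : Tendsto (fun x : ℝ => 2 / (Real.exp (2 * x) + 1)) atTop (nhds 0) :=
    Tendsto.div_atTop tendsto_const_nhds hd
  have h : Tendsto (fun x : ℝ => 1 - 2 / (Real.exp (2 * x) + 1)) atTop (nhds (1 - 0)) :=
    Tendsto.sub tendsto_const_nhds h0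
  refine Tendsto.congr (fun x => (tanh_eq_exp x).symm) ?_
  simpa using h
  
private lemma tendsto_tanh_atBot : Tendsto Real.tanh atBot (nhds (-1)) := by
  have h := tendsto_tanh_atTop.comp tendsto_neg_atBot_atTop
  have h' : Tendsto (fun x => -Real.tanh x) atBot (nhds 1) := by
    refine h.congr fun x => ?_
    simp [Function.comp, Real.tanh_neg]
  simpa using h'.neg

private lemma limit_combo {l : Filter ℝ} {a : ℝ} (ha : a ^ 2 = 1)
    (hT : Tendsto Real.tanh l (nhds a))
    (hM : Tendsto (fun s => (1 - Real.tanh s ^ 2) * Real.log (Real.cosh s)) l (nhds 0)) :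
    Tendsto D1 l (nhds 0) ∧ Tendsto D2 l (nhds 0) := by
  have hT2 : Tendsto (fun s => Real.tanh s ^ 2) l (nhds 1) := by
    have := hT.pow 2
    rwa [ha] at this
  have hT3 : Tendsto (fun s => Real.tanh s ^ 3) l (nhds (a ^ 3)) := hT.pow 3
  constructor
  · have h1 : Tendsto (fun s => (1 - 3 * Real.tanh s ^ 2)
        * ((1 - Real.tanh s ^ 2) * Real.log (Real.cosh s))) l (nhds ((1 - 3 * 1) * 0)) :=
      (tendsto_const_nhds.sub (hT2.const_mul 3)).mul hM
    have h2 : Tendsto (fun s => Real.tanh s ^ 2 * (1 - Real.tanh s ^ 2)) l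
        (nhds (1 * (1 - 1))) := hT2.mul (tendsto_const_nhds.sub hT2)
    have h := ((h1.add h2).const_mul (-(72 / 7) : ℝ))
    have : Tendsto D1 l (nhds (-(72 / 7) * ((1 - 3 * 1) * 0 + 1 * (1 - 1)))) := by
      refine h.congr fun s => ?_
      simp only [D1]; ring
    simpa using this
  · have h1 : Tendsto (fun s => (12 * Real.tanh s ^ 3 - 8 * Real.tanh s)
        * ((1 - Real.tanh s ^ 2) * Real.log (Real.cosh s))) l
        (nhds ((12 * a ^ 3 - 8 * a) * 0)) :=
      ((hT3.const_mul 12).sub (hT.const_mul 8)).mul hM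
    have h2 : Tendsto (fun s => (3 * Real.tanh s - 7 * Real.tanh s ^ 3)
        * (1 - Real.tanh s ^ 2)) l (nhds ((3 * a - 7 * a ^ 3) * (1 - 1))) := by
      exact ((hT.const_mul 3).sub (hT3.const_mul 7)).mul
        (Tendsto.sub (tendsto_const_nhds : Tendsto (fun _ : ℝ => (1:ℝ)) l (nhds 1)) hT2)
    have h := ((h1.add h2).const_mul (-(72 / 7) : ℝ))
    have : Tendsto D2 l
        (nhds (-(72 / 7) * ((12 * a ^ 3 - 8 * a) * 0 + (3 * a - 7 * a ^ 3) * (1 - 1)))) := by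
      refine h.congr fun s => ?_
      simp only [D2]
    simpa using this

theorem stmt_14 :
    (∀ s : ℝ, deriv (deriv u₁) s - 2 * u₀ s * u₁ s = (u₀ s + 10 / 7) * deriv u₀ s) ∧
    Tendsto (deriv u₁) atTop (nhds 0) ∧ Tendsto (deriv u₁) atBot (nhds 0) ∧
    Tendsto (deriv (deriv u₁)) atTop (nhds 0) ∧
    Tendsto (deriv (deriv u₁)) atBot (nhds 0) := by
  obtain ⟨hA1, hA2⟩ := limit_combo (a := 1) (by norm_num) tendsto_tanh_atTop
    (tendsto_M tendsto_cosh_atTop)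
  obtain ⟨hB1, hB2⟩ := limit_combo (a := -1) (by norm_num) tendsto_tanh_atBot
    (tendsto_M tendsto_cosh_atBot)
  refine ⟨fun s => ?_, by rw [du₁]; exact hA1, by rw [du₁]; exact hB1,
    by rw [du₂]; exact hA2, by rw [du₂]; exact hB2⟩
  rw [du₂, u₁_eq, du₀]
  simp only [D2, u₀]
  ring
end
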